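/- (Appendix D: inner-envelope semicircle bound, equations (D9)–(D11), generalising Howard's semicircle theorem.) Assume the additional Appendix D setup. Let k ≥ 0 and let (c, ψ) be an unstable mode, c = c_r + i·c_i with c_i ≠ 0. Then for every real number r_c, (c_r − r_c)² + c_i² ≤ R(r_c)², where R(r_c)² = max_{y ∈ [−L/2, L/2]} (U(y) − r_c)² + (1/(κ₀² + k²))·max( 0, max_{y ∈ [−L/2, L/2]} (r_c − U(y))·B(y) ). -/

import Mathlib

open Set

noncomputable section

open intervalIntegral


lemma mul_star_re (z : ℂ) : (z * star z).re = ‖z‖^2 := by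
  rw [Complex.star_def, Complex.mul_conj, Complex.ofReal_re, ← Complex.sq_norm]

lemma norm_sub_smul_sq (u v : ℂ) (t : ℝ) :
    ‖u - (t:ℂ)*v‖^2 = ‖u‖^2 - 2*t*((u * star v).re) + t^2*‖v‖^2 := by
  rw [← mul_star_re, ← mul_star_re, ← mul_star_re]
  simp [Complex.mul_re, Complex.sub_re, Complex.sub_im, Complex.mul_im]
  ring

lemma hasDerivAt_norm_sq (f fd : ℝ → ℂ) (x : ℝ) (h : HasDerivAt f (fd x) x) :
    HasDerivAt (fun y => ‖f y‖^2) ((fd x * star (f x) + f x * star (fd x)).re) x := by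
  have h2 : HasDerivAt (fun y => f y * star (f y))
      (fd x * star (f x) + f x * star (fd x)) x := h.mul h.star
  have h3 := Complex.reCLM.hasFDerivAt.comp_hasDerivAt x h2
  have hfun : (fun y => ‖f y‖^2) = fun y => (f y * star (f y)).re := by
    funext y; rw [mul_star_re]
  rw [hfun]
  exact h3

lemma sin_lower (x : ℝ) (h1 : 0 < x) (h2 : x ≤ 1) : (3/4)*x ≤ Real.sin x := by
  have ha := Real.sin_gt_sub_cube h1
  nlinarith [mul_nonneg h1.le (mul_nonneg (by linarith : (0:ℝ) ≤ 1 - x) (by linarith : (0:ℝ) ≤ 1 + x))]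

set_option maxHeartbeats 2000000 in
lemma wirtinger {a b : ℝ} (hab : a < b) (f fd : ℝ → ℂ)
    (hf : ∀ y ∈ Icc a b, HasDerivAt f (fd y) y)
    (hfdc : ContinuousOn fd (Icc a b))
    (ha0 : f a = 0) (hb0 : f b = 0) :
    (Real.pi/(b-a))^2 * ∫ y in a..b, ‖f y‖^2 ≤ ∫ y in a..b, ‖fd y‖^2 := by
  have hs : 0 < b - a := sub_pos.mpr hab
  set s : ℝ := b - a with hsdef
  set ω : ℝ := Real.pi / s with hωdef
  have hπ := Real.pi_pos
  have hω : 0 < ω := div_pos hπ hs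
  set m : ℝ := (a+b)/2 with hmdef
  set φ : ℝ → ℝ := fun y => Real.cos (ω*(y-m)) with hφdef
  set φd : ℝ → ℝ := fun y => -(ω * Real.sin (ω*(y-m))) with hφddef
  set t : ℝ → ℝ := fun y => φd y / φ y with htdef
  set r : ℝ → ℝ := fun y => ‖f y‖^2 with hrdef
  set rd : ℝ → ℝ := fun y => (fd y * star (f y) + f y * star (fd y)).re with hrddef
  have hfc : ContinuousOn f (Icc a b) := fun y hy =>
    (hf y hy).continuousAt.continuousWithinAt
  have hrc : ContinuousOn r (Icc a b) := (hfc.norm).pow 2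
  have hrdc : ContinuousOn rd (Icc a b) := by
    apply Complex.continuous_re.comp_continuousOn
    exact (hfdc.mul (continuous_star.comp_continuousOn hfc)).add
      (hfc.mul (continuous_star.comp_continuousOn hfdc))
  obtain ⟨C, hC⟩ := isCompact_Icc.exists_bound_of_continuousOn hfdc
  have hC0 : 0 ≤ C := le_trans (norm_nonneg _) (hC a ⟨le_refl a, le_of_lt hab⟩)
  -- bound ‖f y‖ ≤ C * (b - y) and ≤ C * (y - a)
  have hfb : ∀ y ∈ Icc a b, ‖f y‖ ≤ C * (b - y) := by
    intro y hy
    have hyb : y ≤ b := hy.2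
    have hsub : Icc y b ⊆ Icc a b := Icc_subset_Icc hy.1 le_rfl
    have hint : IntervalIntegrable fd MeasureTheory.volume y b :=
      (hfdc.mono (by rw [uIcc_of_le hyb]; exact hsub)).intervalIntegrable
    have hftc : ∫ z in y..b, fd z = f b - f y := by
      apply integral_eq_sub_of_hasDerivAt _ hint
      intro x hx
      exact hf x (hsub (by rwa [uIcc_of_le hyb] at hx))
    have : ‖∫ z in y..b, fd z‖ ≤ C * |b - y| := by
      apply norm_integral_le_of_norm_le_const
      intro x hx
      refine hC x ?_
      have := Ioc_subset_Icc_self.trans hsub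
      rw [uIoc_of_le hyb] at hx
      exact this hx
    rw [hftc, hb0, zero_sub, norm_neg] at this
    rwa [abs_of_nonneg (sub_nonneg.mpr hyb)] at this
  have hfa : ∀ y ∈ Icc a b, ‖f y‖ ≤ C * (y - a) := by
    intro y hy
    have hay : a ≤ y := hy.1
    have hsub : Icc a y ⊆ Icc a b := Icc_subset_Icc le_rfl hy.2
    have hint : IntervalIntegrable fd MeasureTheory.volume a y :=
      (hfdc.mono (by rw [uIcc_of_le hay]; exact hsub)).intervalIntegrable
    have hftc : ∫ z in a..y, fd z = f y - f a := by
      apply integral_eq_sub_of_hasDerivAt _ hint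
      intro x hx
      exact hf x (hsub (by rwa [uIcc_of_le hay] at hx))
    have : ‖∫ z in a..y, fd z‖ ≤ C * |y - a| := by
      apply norm_integral_le_of_norm_le_const
      intro x hx
      refine hC x ?_
      have := Ioc_subset_Icc_self.trans hsub
      rw [uIoc_of_le hay] at hx
      exact this hx
    rw [hftc, ha0, sub_zero] at this
    rwa [abs_of_nonneg (sub_nonneg.mpr hay)] at this
  -- r bounded by C^2 * s^2
  have hrbd : ∀ y ∈ Icc a b, r y ≤ C^2 * s^2 := by
    intro y hy
    have h1 : ‖f y‖ ≤ C * s := le_trans (hfb y hy)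
      (by
        have : b - y ≤ s := by simp [hsdef]; linarith [hy.1]
        exact mul_le_mul_of_nonneg_left this hC0)
    have h2 : (0:ℝ) ≤ ‖f y‖ := norm_nonneg _
    calc r y = ‖f y‖^2 := rfl
      _ ≤ (C*s)^2 := by nlinarith
      _ = C^2 * s^2 := by ring
  -- integrability over [a,b]
  have hi_r : IntervalIntegrable r MeasureTheory.volume a b :=
    (hrc.mono (by rw [uIcc_of_le hab.le])).intervalIntegrable
  have hi_fd2 : IntervalIntegrable (fun y => ‖fd y‖^2) MeasureTheory.volume a b :=
    ((hfdc.norm.pow 2).mono (by rw [uIcc_of_le hab.le])).intervalIntegrable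
  -- the key estimate for small δ
  have H : ∀ δ : ℝ, 0 < δ → δ ≤ s/2 → ω*δ ≤ 1 →
      ω^2 * ∫ y in a..b, r y ≤ (∫ y in a..b, ‖fd y‖^2)
        + (ω^2*(2*C^2*s^2) + 8/3*C^2) * δ := by
    intro δ hδ hδs hδω
    set A : ℝ := a + δ with hAdef
    set Bb : ℝ := b - δ with hBdef
    have hAB : A ≤ Bb := by simp [hAdef, hBdef]; linarith [hδs]
    have haA : a < A := by simp [hAdef]; linarith
    have hBb : Bb < b := by simp [hBdef]; linarith
    have hsubI : Icc A Bb ⊆ Icc a b := Icc_subset_Icc haA.le hBb.le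
    -- cos positive on [A, Bb]
    have hφpos : ∀ y ∈ Icc A Bb, 0 < φ y := by
      intro y hy
      apply Real.cos_pos_of_mem_Ioo
      have h1 : ω * (s/2) = Real.pi/2 := by
        rw [hωdef]; field_simp
      constructor
      · have : -(s/2) < y - m := by simp [hmdef, hsdef]; linarith [hy.1, haA, hδ]
        have := (mul_lt_mul_iff_right₀ hω).mpr this
        rw [mul_neg, h1] at this
        linarith
      · have : y - m < s/2 := by simp [hmdef, hsdef]; linarith [hy.2, hBb, hδ]
        have := (mul_lt_mul_iff_right₀ hω).mpr this
        rw [h1] at this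
        linarith
    -- derivative facts on Icc A Bb
    have hφder : ∀ y : ℝ, HasDerivAt φ (φd y) y := by
      intro y
      have h0 : HasDerivAt (fun y : ℝ => ω*(y-m)) ω y := by
        simpa using ((hasDerivAt_id y).sub_const m).const_mul ω
      have := (Real.hasDerivAt_cos (ω*(y-m))).comp y h0
      exact this.congr_deriv (by simp [hφddef, mul_comm])
    have hφdder : ∀ y : ℝ, HasDerivAt φd (-(ω^2 * φ y)) y := by
      intro y
      have h0 : HasDerivAt (fun y : ℝ => ω*(y-m)) ω y := by
        simpa using ((hasDerivAt_id y).sub_const m).const_mul ω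
      have := ((Real.hasDerivAt_sin (ω*(y-m))).comp y h0).const_mul ω
      have h2 := this.neg
      refine h2.congr_deriv (Eq.symm ?_)
      simp only [hφdef]
      ring
    have htder : ∀ y ∈ Icc A Bb, HasDerivAt t (-ω^2 - (t y)^2) y := by
      intro y hy
      have hφy := hφpos y hy
      have := (hφdder y).div (hφder y) (ne_of_gt hφy)
      refine this.congr_deriv (Eq.symm ?_)
      rw [htdef]; field_simp
    have hrder : ∀ y ∈ Icc a b, HasDerivAt r (rd y) y := by
      intro y hy
      exact hasDerivAt_norm_sq f fd y (hf y hy)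
    set F : ℝ → ℝ := fun y => t y * r y with hFdef
    set Fd : ℝ → ℝ := fun y => (-ω^2 - (t y)^2) * r y + t y * rd y with hFddef
    have hFder : ∀ y ∈ Icc A Bb, HasDerivAt F (Fd y) y := by
      intro y hy
      exact (htder y hy).mul (hrder y (hsubI hy))
    -- continuity of t on Icc A Bb
    have hφdc : Continuous φd := by rw [hφddef]; fun_prop
    have hφc : Continuous φ := by rw [hφdef]; fun_prop
    have htc : ContinuousOn t (Icc A Bb) := by
      apply ContinuousOn.div hφdc.continuousOn hφc.continuousOn
      intro y hy; exact ne_of_gt (hφpos y hy)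
    have hFdc : ContinuousOn Fd (Icc A Bb) := by
      apply ContinuousOn.add
      · exact ((continuous_const.continuousOn.sub ((htc.pow 2))).mul (hrc.mono hsubI))
      · exact htc.mul (hrdc.mono hsubI)
    have hiFd : IntervalIntegrable Fd MeasureTheory.volume A Bb :=
      (hFdc.mono (by rw [uIcc_of_le hAB])).intervalIntegrable
    have hftcF : ∫ y in A..Bb, Fd y = F Bb - F A := by
      apply integral_eq_sub_of_hasDerivAt _ hiFd
      intro x hx
      exact hFder x (by rwa [uIcc_of_le hAB] at hx)
    -- pointwise identity on Icc A Bb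
    have hpt : ∀ y ∈ Icc A Bb,
        ‖fd y‖^2 = ‖fd y - (t y : ℂ) * f y‖^2 + Fd y + ω^2 * r y := by
      intro y hy
      have hrd2 : rd y = 2 * ((fd y * star (f y)).re) := by
        simp [hrddef, Complex.mul_re, Complex.add_re]
        ring
      rw [norm_sub_smul_sq]
      simp only [hFddef, hrd2, hrdef]
      ring
    -- integrate the identity
    have hiP : IntervalIntegrable (fun y => ‖fd y - (t y : ℂ) * f y‖^2)
        MeasureTheory.volume A Bb := by
      apply ContinuousOn.intervalIntegrable
      rw [uIcc_of_le hAB]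
      exact (((hfdc.mono hsubI).sub ((Complex.continuous_ofReal.comp_continuousOn htc).mul
        (hfc.mono hsubI))).norm.pow 2)
    have hi_rAB : IntervalIntegrable r MeasureTheory.volume A Bb :=
      ((hrc.mono hsubI).mono (by rw [uIcc_of_le hAB])).intervalIntegrable
    have hsplit : ∫ y in A..Bb, ‖fd y‖^2
        = (∫ y in A..Bb, ‖fd y - (t y : ℂ) * f y‖^2) + (F Bb - F A)
          + ω^2 * ∫ y in A..Bb, r y := by
      rw [← hftcF, ← intervalIntegral.integral_const_mul,
        ← intervalIntegral.integral_add hiP hiFd,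
        ← intervalIntegral.integral_add (hiP.add hiFd) (hi_rAB.const_mul _)]
      apply intervalIntegral.integral_congr
      intro y hy
      rw [uIcc_of_le hAB] at hy
      exact hpt y hy
    -- nonnegativity of the P integral
    have hPnn : 0 ≤ ∫ y in A..Bb, ‖fd y - (t y : ℂ) * f y‖^2 :=
      intervalIntegral.integral_nonneg hAB (fun y _ => sq_nonneg _)
    -- splitting lemma hypotheses
    have hsub_aA : uIcc a A ⊆ uIcc a b := by
      rw [uIcc_of_le haA.le, uIcc_of_le hab.le]
      exact Icc_subset_Icc le_rfl (hAB.trans hBb.le)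
    have hsub_ABb : uIcc A Bb ⊆ uIcc a b := by
      rw [uIcc_of_le hAB, uIcc_of_le hab.le]; exact hsubI
    have hsub_Bbb : uIcc Bb b ⊆ uIcc a b := by
      rw [uIcc_of_le hBb.le, uIcc_of_le hab.le]
      exact Icc_subset_Icc (haA.le.trans hAB) le_rfl
    have hsub_aBb : uIcc a Bb ⊆ uIcc a b := by
      rw [uIcc_of_le (haA.le.trans hAB), uIcc_of_le hab.le]
      exact Icc_subset_Icc le_rfl hBb.le
    have hi2aA := hi_fd2.mono_set hsub_aA
    have hi2ABb := hi_fd2.mono_set hsub_ABb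
    have hi2Bbb := hi_fd2.mono_set hsub_Bbb
    have hiraA := hi_r.mono_set hsub_aA
    have hirABb := hi_r.mono_set hsub_ABb
    have hirBbb := hi_r.mono_set hsub_Bbb
    -- ∫_{A..Bb} ‖fd‖² ≤ ∫_{a..b} ‖fd‖²
    have hxx1 : (∫ y in a..A, ‖fd y‖^2) + ∫ y in A..Bb, ‖fd y‖^2
        = ∫ y in a..Bb, ‖fd y‖^2 :=
      intervalIntegral.integral_add_adjacent_intervals hi2aA hi2ABb
    have hxx2 : (∫ y in a..Bb, ‖fd y‖^2) + ∫ y in Bb..b, ‖fd y‖^2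
        = ∫ y in a..b, ‖fd y‖^2 :=
      intervalIntegral.integral_add_adjacent_intervals (hi_fd2.mono_set hsub_aBb) hi2Bbb
    have hnn_aA : 0 ≤ ∫ y in a..A, ‖fd y‖^2 :=
      intervalIntegral.integral_nonneg haA.le (fun y _ => sq_nonneg _)
    have hnn_Bbb : 0 ≤ ∫ y in Bb..b, ‖fd y‖^2 :=
      intervalIntegral.integral_nonneg hBb.le (fun y _ => sq_nonneg _)
    have hmono_fd2 : (∫ y in A..Bb, ‖fd y‖^2) ≤ ∫ y in a..b, ‖fd y‖^2 := by
      linarith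
    -- ∫_{a..b} r ≤ ∫_{A..Bb} r + 2 C²s² δ
    have hraA : (∫ y in a..A, r y) ≤ C^2*s^2*δ := by
      have := intervalIntegral.integral_mono_on haA.le hiraA
        (_root_.intervalIntegrable_const (c := C^2*s^2))
        (fun y hy => hrbd y (Icc_subset_Icc le_rfl (hAB.trans hBb.le) hy))
      rw [intervalIntegral.integral_const, smul_eq_mul] at this
      calc (∫ y in a..A, r y) ≤ (A - a) * (C^2*s^2) := this
        _ = C^2*s^2*δ := by rw [hAdef]; ring
    have hrBbb : (∫ y in Bb..b, r y) ≤ C^2*s^2*δ := by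
      have := intervalIntegral.integral_mono_on hBb.le hirBbb
        (_root_.intervalIntegrable_const (c := C^2*s^2))
        (fun y hy => hrbd y (Icc_subset_Icc (haA.le.trans hAB) le_rfl hy))
      rw [intervalIntegral.integral_const, smul_eq_mul] at this
      calc (∫ y in Bb..b, r y) ≤ (b - Bb) * (C^2*s^2) := this
        _ = C^2*s^2*δ := by rw [hBdef]; ring
    have hrsplit : (∫ y in a..b, r y)
        = (∫ y in a..A, r y) + (∫ y in A..Bb, r y) + ∫ y in Bb..b, r y := by
      rw [intervalIntegral.integral_add_adjacent_intervals hiraA hirABb,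
        intervalIntegral.integral_add_adjacent_intervals (hi_r.mono_set hsub_aBb) hirBbb]
    have hrmono : (∫ y in a..b, r y) - 2*(C^2*s^2)*δ ≤ ∫ y in A..Bb, r y := by
      rw [hrsplit]; linarith
    -- boundary values
    have hωδ : 0 < ω*δ := mul_pos hω hδ
    have hsin : (3/4)*(ω*δ) ≤ Real.sin (ω*δ) := sin_lower _ hωδ hδω
    have hsinpos : 0 < Real.sin (ω*δ) := by
      have : (0:ℝ) < (3/4)*(ω*δ) := by positivity
      linarith
    have hωhalf : ω * (s/2) = Real.pi/2 := by rw [hωdef]; field_simp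
    have htbound : ∀ y : ℝ, φ y = Real.sin (ω*δ) → |t y| ≤ 4/(3*δ) := by
      intro y hyφ
      have h1 : |t y| = |φd y| / Real.sin (ω*δ) := by
        rw [htdef]
        simp only [abs_div, hyφ, abs_of_pos hsinpos]
      have h2 : |φd y| ≤ ω := by
        rw [hφddef]; simp only [abs_neg, abs_mul, abs_of_pos hω]
        calc ω * |Real.sin (ω*(y-m))| ≤ ω * 1 :=
              mul_le_mul_of_nonneg_left (Real.abs_sin_le_one _) hω.le
          _ = ω := mul_one ω
      rw [h1]
      calc |φd y| / Real.sin (ω*δ) ≤ ω / Real.sin (ω*δ) := by gcongr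
        _ ≤ 4/(3*δ) := by
            rw [div_le_div_iff₀ hsinpos (by positivity)]
            ring_nf
            ring_nf at hsin
            linarith
    have hφBb : φ Bb = Real.sin (ω*δ) := by
      have h1 : Bb - m = s/2 - δ := by rw [hBdef, hmdef, hsdef]; ring
      rw [hφdef]; simp only [h1, mul_sub, hωhalf]
      exact Real.cos_pi_div_two_sub (ω*δ)
    have hφA : φ A = Real.sin (ω*δ) := by
      have h1 : A - m = -(s/2 - δ) := by rw [hAdef, hmdef, hsdef]; ring
      rw [hφdef]; simp only [h1, mul_neg, mul_sub, hωhalf, Real.cos_neg]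
      exact Real.cos_pi_div_two_sub (ω*δ)
    have hrBb : r Bb ≤ C^2*δ^2 := by
      have h1 := hfb Bb ⟨haA.le.trans hAB, hBb.le⟩
      have h2 : b - Bb = δ := by rw [hBdef]; ring
      rw [h2] at h1
      have h3 := pow_le_pow_left₀ (norm_nonneg (f Bb)) h1 2
      calc r Bb = ‖f Bb‖^2 := rfl
        _ ≤ (C*δ)^2 := h3
        _ = C^2*δ^2 := by ring
    have hrA : r A ≤ C^2*δ^2 := by
      have h1 := hfa A ⟨haA.le, hAB.trans hBb.le⟩
      have h2 : A - a = δ := by rw [hAdef]; ring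
      rw [h2] at h1
      have h3 := pow_le_pow_left₀ (norm_nonneg (f A)) h1 2
      calc r A = ‖f A‖^2 := rfl
        _ ≤ (C*δ)^2 := h3
        _ = C^2*δ^2 := by ring
    have hrnnBb : 0 ≤ r Bb := sq_nonneg _
    have hrnnA : 0 ≤ r A := sq_nonneg _
    have hFBb : |F Bb| ≤ 4/3*C^2*δ := by
      rw [hFdef]
      simp only [abs_mul, abs_of_nonneg hrnnBb]
      calc |t Bb| * r Bb ≤ (4/(3*δ)) * (C^2*δ^2) :=
            mul_le_mul (htbound Bb hφBb) hrBb hrnnBb (by positivity)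
        _ = 4/3*C^2*δ := by field_simp
    have hFA : |F A| ≤ 4/3*C^2*δ := by
      rw [hFdef]
      simp only [abs_mul, abs_of_nonneg hrnnA]
      calc |t A| * r A ≤ (4/(3*δ)) * (C^2*δ^2) :=
            mul_le_mul (htbound A hφA) hrA hrnnA (by positivity)
        _ = 4/3*C^2*δ := by field_simp
    -- combine
    have hscaled := mul_le_mul_of_nonneg_left hrmono (sq_nonneg ω)
    rw [mul_sub] at hscaled
    have hb1 : -(4/3*C^2*δ) ≤ F Bb := neg_le_of_abs_le hFBb
    have hb2 : F A ≤ 4/3*C^2*δ := le_of_abs_le hFA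
    ring_nf
    ring_nf at hscaled hsplit hb1 hb2 hPnn hmono_fd2
    linarith
  -- conclude by letting δ → 0
  apply le_of_forall_pos_le_add
  intro ε hε
  set K := ω^2*(2*C^2*s^2) + 8/3*C^2 with hKdef
  have hK0 : 0 ≤ K := by
    rw [hKdef]
    have h1 : (0:ℝ) ≤ 2*C^2*s^2 := mul_nonneg (mul_nonneg (by norm_num) (sq_nonneg C)) (sq_nonneg s)
    have h2 : (0:ℝ) ≤ 8/3*C^2 := mul_nonneg (by norm_num) (sq_nonneg C)
    exact add_nonneg (mul_nonneg (sq_nonneg ω) h1) h2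
  have hK1 : (0:ℝ) < K + 1 := by linarith
  set δ := min (min (s/2) (1/ω)) (ε/(K+1)) with hδdef
  have hδpos : 0 < δ :=
    lt_min (lt_min (half_pos hs) (one_div_pos.mpr hω)) (div_pos hε hK1)
  have hδ1 : δ ≤ s/2 := le_trans (min_le_left _ _) (min_le_left _ _)
  have hδ2 : ω*δ ≤ 1 := by
    have h1 : δ ≤ 1/ω := le_trans (min_le_left _ _) (min_le_right _ _)
    calc ω*δ ≤ ω*(1/ω) := mul_le_mul_of_nonneg_left h1 hω.le
      _ = 1 := mul_one_div_cancel hω.ne'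
  have hδ3 : K*δ ≤ ε := by
    have h1 : δ ≤ ε/(K+1) := min_le_right _ _
    have h2 : K*δ ≤ K*(ε/(K+1)) := mul_le_mul_of_nonneg_left h1 hK0
    have h3 : K*(ε/(K+1)) ≤ (K+1)*(ε/(K+1)) :=
      mul_le_mul_of_nonneg_right (by linarith) (div_nonneg hε.le hK1.le)
    have h4 : (K+1)*(ε/(K+1)) = ε := by
      rw [mul_comm]; exact div_mul_cancel₀ ε (ne_of_gt hK1)
    exact le_trans h2 (le_trans h3 (le_of_eq h4))
  have hH := H δ hδpos hδ1 hδ2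
  exact le_trans hH (by linarith)

lemma mul_star' (z : ℂ) : z * star z = ((‖z‖^2 : ℝ) : ℂ) := by
  rw [Complex.star_def, Complex.mul_conj, ← Complex.sq_norm]

lemma integral_comb2 {a b : ℝ} (c1 c2 : ℝ) (g1 g2 : ℝ → ℝ)
    (h1 : IntervalIntegrable g1 MeasureTheory.volume a b)
    (h2 : IntervalIntegrable g2 MeasureTheory.volume a b) :
    (∫ y in a..b, (c1 * g1 y + c2 * g2 y)) =
      c1 * (∫ y in a..b, g1 y) + c2 * ∫ y in a..b, g2 y := by
  rw [intervalIntegral.integral_add (h1.const_mul c1) (h2.const_mul c2),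
    intervalIntegral.integral_const_mul, intervalIntegral.integral_const_mul]

lemma integral_comb3 {a b : ℝ} (c1 c2 c3 : ℝ) (g1 g2 g3 : ℝ → ℝ)
    (h1 : IntervalIntegrable g1 MeasureTheory.volume a b)
    (h2 : IntervalIntegrable g2 MeasureTheory.volume a b)
    (h3 : IntervalIntegrable g3 MeasureTheory.volume a b) :
    (∫ y in a..b, (c1 * g1 y + c2 * g2 y + c3 * g3 y)) =
      c1 * (∫ y in a..b, g1 y) + c2 * (∫ y in a..b, g2 y) + c3 * ∫ y in a..b, g3 y := by
  rw [intervalIntegral.integral_add ((h1.const_mul c1).add (h2.const_mul c2)) (h3.const_mul c3),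
    intervalIntegral.integral_add (h1.const_mul c1) (h2.const_mul c2),
    intervalIntegral.integral_const_mul, intervalIntegral.integral_const_mul,
    intervalIntegral.integral_const_mul]


/-- An unstable mode for wavenumber `k`: a pair `(c, ψ)` (with derivative data `ψ', ψ''`)
with `Im c ≠ 0`, `ψ` twice continuously differentiable on `[-L/2, L/2]`, not identically
zero, vanishing at the boundary, and satisfying the eigenvalue equation. -/
def IsUnstableMode (L Ld k : ℝ) (U q : ℝ → ℝ) (c : ℂ) (ψ ψ' ψ'' : ℝ → ℂ) : Prop :=
  c.im ≠ 0 ∧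
  (∀ y ∈ Icc (-L/2) (L/2), HasDerivAt ψ (ψ' y) y) ∧
  (∀ y ∈ Icc (-L/2) (L/2), HasDerivAt ψ' (ψ'' y) y) ∧
  ContinuousOn ψ'' (Icc (-L/2) (L/2)) ∧
  (∃ y ∈ Icc (-L/2) (L/2), ψ y ≠ 0) ∧
  ψ (-L/2) = 0 ∧ ψ (L/2) = 0 ∧
  ∀ y ∈ Icc (-L/2) (L/2),
    ψ'' y - ((k^2 + 1/Ld^2 : ℝ) : ℂ) * ψ y + ((q y : ℂ) / ((U y : ℂ) - c)) * ψ y = 0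


set_option maxHeartbeats 2000000 in
/-- Appendix D inner-envelope semicircle bound ((D9)–(D11)): for an unstable mode and
every real `r_c`, `(c_r − r_c)² + c_i² ≤ R(r_c)²`, where
`R(r_c)² = max_{y} (U(y) − r_c)² + (κ₀² + k²)⁻¹ · max(0, max_y (r_c − U(y)) B(y))`
with `B = q + U''` and `κ₀² = π²/L² + 1/L_d²`. -/
theorem appendixD_semicircle_bound
    (L Ld : ℝ) (hL : 0 < L) (hLd : 0 < Ld)
    (U q U' U'' : ℝ → ℝ)
    (hq : ContDiffOn ℝ 1 q (Icc (-L/2) (L/2)))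
    (hU' : ∀ y ∈ Icc (-L/2) (L/2), HasDerivAt U (U' y) y)
    (hU'' : ∀ y ∈ Icc (-L/2) (L/2), HasDerivAt U' (U'' y) y)
    (hU''c : ContinuousOn U'' (Icc (-L/2) (L/2)))
    (k : ℝ) (hk : 0 ≤ k) (c : ℂ) (ψ ψ' ψ'' : ℝ → ℂ)
    (hmode : IsUnstableMode L Ld k U q c ψ ψ' ψ'')
    (B : ℝ → ℝ) (hB : B = fun y => q y + U'' y) :
    ∀ rc : ℝ,
      (c.re - rc) ^ 2 + c.im ^ 2
        ≤ sSup ((fun y => (U y - rc) ^ 2) '' Icc (-L/2) (L/2))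
          + 1 / ((Real.pi ^ 2 / L ^ 2 + 1 / Ld ^ 2) + k ^ 2)
            * max 0 (sSup ((fun y => (rc - U y) * B y) '' Icc (-L/2) (L/2))) := by
  obtain ⟨hci, hdψ, hdψ', hψ''c, ⟨y0, hy0, hψy0⟩, hψa, hψb, heq⟩ := hmode
  set a : ℝ := -L/2 with hadef
  set b : ℝ := L/2 with hbdef
  have hab : a < b := by rw [hadef, hbdef]; linarith
  set μ : ℝ := k^2 + 1/Ld^2 with hμdef
  have hμpos : 0 < μ := by
    have : (0:ℝ) < 1/Ld^2 := by positivity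
    have : (0:ℝ) ≤ k^2 := sq_nonneg k
    rw [hμdef]; linarith
  set V : ℝ → ℂ := fun y => (U y : ℂ) - c with hVdef
  have hVne : ∀ y : ℝ, V y ≠ 0 := by
    intro y h
    apply hci
    have h2 := congrArg Complex.im h
    simp only [hVdef, Complex.sub_im, Complex.ofReal_im, Complex.zero_im, zero_sub,
      neg_eq_zero] at h2
    exact h2
  set η : ℝ → ℂ := fun y => ψ y / V y with hηdef
  set ηd : ℝ → ℂ := fun y => (ψ' y * V y - ψ y * (U' y : ℂ)) / (V y)^2 with hηddef
  -- continuity facts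
  have hUc : ContinuousOn U (Icc a b) := fun y hy => (hU' y hy).continuousAt.continuousWithinAt
  have hU'c : ContinuousOn U' (Icc a b) := fun y hy => (hU'' y hy).continuousAt.continuousWithinAt
  have hψc : ContinuousOn ψ (Icc a b) := fun y hy => (hdψ y hy).continuousAt.continuousWithinAt
  have hψ'c : ContinuousOn ψ' (Icc a b) := fun y hy => (hdψ' y hy).continuousAt.continuousWithinAt
  have hVc : ContinuousOn V (Icc a b) :=
    (Complex.continuous_ofReal.comp_continuousOn hUc).sub continuousOn_const
  have hηc : ContinuousOn η (Icc a b) :=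
    hψc.div hVc (fun y _ => hVne y)
  have hηdc : ContinuousOn ηd (Icc a b) := by
    apply ContinuousOn.div
    · exact (hψ'c.mul hVc).sub (hψc.mul (Complex.continuous_ofReal.comp_continuousOn hU'c))
    · exact hVc.pow 2
    · intro y _; exact pow_ne_zero 2 (hVne y)
  have hBc : ContinuousOn B (Icc a b) := by
    rw [hB]; exact (hq.continuousOn).add hU''c
  -- derivative of η
  have hdV : ∀ y ∈ Icc a b, HasDerivAt V ((U' y : ℂ)) y := by
    intro y hy
    exact ((hU' y hy).ofReal_comp).sub_const c
  have hdη : ∀ y ∈ Icc a b, HasDerivAt η (ηd y) y := by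
    intro y hy
    exact (hdψ y hy).div (hdV y hy) (hVne y)
  have hηa : η a = 0 := by rw [hηdef]; simp [hψa]
  have hηb : η b = 0 := by rw [hηdef]; simp [hψb]
  -- real quantities
  set e : ℝ → ℝ := fun y => ‖η y‖^2 with hedef
  set n2 : ℝ → ℝ := fun y => ‖ηd y‖^2 with hn2def
  set W : ℝ → ℝ := fun y => n2 y + μ * e y with hWdef
  set Av : ℝ → ℝ := fun y => U y - c.re with hAvdef
  set f1 : ℝ → ℝ := fun y => (Av y^2 - c.im^2) * W y - B y * Av y * e y with hf1def
  set f2 : ℝ → ℝ := fun y => B y * e y - 2 * Av y * W y with hf2def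
  -- the key derivative computation
  set G : ℝ → ℂ := fun y => (ψ' y * V y - ψ y * (U' y : ℂ)) * star (η y) with hGdef
  have hGder : ∀ y ∈ Icc a b,
      HasDerivAt G (((f1 y : ℝ) : ℂ) + ((c.im * f2 y : ℝ) : ℂ) * Complex.I) y := by
    intro y hy
    have h1 : HasDerivAt (fun z => ψ' z * V z - ψ z * (U' z : ℂ))
        (ψ'' y * V y - ψ y * (U'' y : ℂ)) y := by
      have ha1 := (hdψ' y hy).mul (hdV y hy)
      have ha2 := (hdψ y hy).mul ((hU'' y hy).ofReal_comp)
      have := ha1.sub ha2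
      refine this.congr_deriv (Eq.symm ?_)
      ring
    have h2 : HasDerivAt (fun z => star (η z)) (star (ηd y)) y := (hdη y hy).star
    have h3 := h1.mul h2
    refine h3.congr_deriv (Eq.symm ?_)
    -- now the algebraic identity
    have hψeq : ψ y = V y * η y := by
      rw [hηdef]; simp only []
      rw [mul_div_cancel₀ _ (hVne y)]
    have hψ''eq : ψ'' y * V y = (μ:ℂ) * (ψ y * V y) - (q y : ℂ) * ψ y := by
      have h := heq y hy
      have h' : ψ'' y = ((μ:ℝ):ℂ) * ψ y - ((q y : ℂ) / V y) * ψ y := by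
        linear_combination h
      rw [h']
      field_simp [hVne y]
    have hηs : η y * star (η y) = ((e y : ℝ) : ℂ) := by rw [hedef]; exact mul_star' _
    have hηds : ηd y * star (ηd y) = ((n2 y : ℝ) : ℂ) := by rw [hn2def]; exact mul_star' _
    have hVηd : ψ' y * V y - ψ y * (U' y : ℂ) = (V y)^2 * ηd y := by
      rw [hηddef]; simp only []
      rw [mul_div_cancel₀ _ (pow_ne_zero 2 (hVne y))]
    have hVform : V y = ((Av y : ℝ) : ℂ) - ((c.im : ℝ) : ℂ) * Complex.I := by
      rw [hVdef, hAvdef]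
      simp only [Complex.ext_iff, Complex.sub_re, Complex.sub_im, Complex.ofReal_re,
        Complex.ofReal_im, Complex.mul_re, Complex.mul_im, Complex.I_re, Complex.I_im]
      constructor <;> simp
    have hBq : (B y : ℂ) = (q y : ℂ) + (U'' y : ℂ) := by
      rw [hB]; push_cast; ring
    -- reduce LHS
    have step1 : (ψ'' y * V y - ψ y * (U'' y:ℂ)) * star (η y)
        + (ψ' y * V y - ψ y * (U' y : ℂ)) * star (ηd y)
        = ((μ:ℂ) * V y - (B y:ℂ)) * V y * ((e y : ℝ):ℂ) + (V y)^2 * ((n2 y:ℝ):ℂ) := by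
      rw [hψ''eq, hVηd, hBq]
      calc ((μ:ℂ) * (ψ y * V y) - (q y:ℂ) * ψ y - ψ y * (U'' y:ℂ)) * star (η y)
            + (V y)^2 * ηd y * star (ηd y)
          = ((μ:ℂ) * V y - ((q y:ℂ) + (U'' y:ℂ))) * V y * (η y * star (η y))
            + (V y)^2 * (ηd y * star (ηd y)) := by rw [hψeq]; ring
        _ = ((μ:ℂ) * V y - ((q y:ℂ) + (U'' y:ℂ))) * V y * ((e y:ℝ):ℂ)
            + (V y)^2 * ((n2 y:ℝ):ℂ) := by rw [hηs, hηds]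
    rw [step1, hVform]
    -- expand into real and imaginary parts
    rw [hf1def, hf2def, hWdef]
    simp only [Complex.ext_iff, Complex.add_re, Complex.add_im, Complex.sub_re, Complex.sub_im,
      Complex.mul_re, Complex.mul_im, Complex.ofReal_re, Complex.ofReal_im, Complex.I_re,
      Complex.I_im, Complex.ofReal_mul, pow_two]
    constructor <;> ring
  -- integrability setup
  have hIcc : uIcc a b = Icc a b := uIcc_of_le hab.le
  have hec : ContinuousOn e (Icc a b) := (hηc.norm).pow 2
  have hn2c : ContinuousOn n2 (Icc a b) := (hηdc.norm).pow 2
  have hWc : ContinuousOn W (Icc a b) := hn2c.add (continuousOn_const.mul hec)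
  have hAvc : ContinuousOn Av (Icc a b) := hUc.sub continuousOn_const
  have hf1c : ContinuousOn f1 (Icc a b) :=
    (((hAvc.pow 2).sub continuousOn_const).mul hWc).sub ((hBc.mul hAvc).mul hec)
  have hf2c : ContinuousOn f2 (Icc a b) :=
    (hBc.mul hec).sub ((continuousOn_const.mul hAvc).mul hWc)
  have hGa : G a = 0 := by rw [hGdef]; simp [hηa]
  have hGb : G b = 0 := by rw [hGdef]; simp [hηb]
  have hi1 : IntervalIntegrable (fun y => ((f1 y : ℝ) : ℂ)) MeasureTheory.volume a b := by
    apply ContinuousOn.intervalIntegrable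
    rw [hIcc]
    exact Complex.continuous_ofReal.comp_continuousOn hf1c
  have hi2 : IntervalIntegrable (fun y => ((c.im * f2 y : ℝ) : ℂ) * Complex.I)
      MeasureTheory.volume a b := by
    apply ContinuousOn.intervalIntegrable
    rw [hIcc]
    exact (Complex.continuous_ofReal.comp_continuousOn
      (continuousOn_const.mul hf2c)).mul continuousOn_const
  have hFTC : (∫ y in a..b, (((f1 y : ℝ) : ℂ) + ((c.im * f2 y : ℝ) : ℂ) * Complex.I)) = 0 := by
    rw [integral_eq_sub_of_hasDerivAt (fun y hy => hGder y (by rwa [hIcc] at hy))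
      (hi1.add hi2), hGa, hGb, sub_self]
  have hsplitC : (∫ y in a..b, (((f1 y : ℝ) : ℂ) + ((c.im * f2 y : ℝ) : ℂ) * Complex.I))
      = ((∫ y in a..b, f1 y : ℝ) : ℂ) + ((∫ y in a..b, c.im * f2 y : ℝ) : ℂ) * Complex.I := by
    rw [intervalIntegral.integral_add hi1 hi2, intervalIntegral.integral_mul_const,
      intervalIntegral.integral_ofReal, intervalIntegral.integral_ofReal]
  have hre0 : (∫ y in a..b, f1 y) = 0 := by
    have h := hsplitC.symm.trans hFTC
    have := congrArg Complex.re h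
    simpa using this
  have him0 : (∫ y in a..b, f2 y) = 0 := by
    have h := hsplitC.symm.trans hFTC
    have h2 := congrArg Complex.im h
    simp only [Complex.add_im, Complex.ofReal_im, Complex.mul_im, Complex.I_im, Complex.I_re,
      Complex.ofReal_re, zero_add, mul_zero, mul_one, add_zero] at h2
    rw [intervalIntegral.integral_const_mul] at h2
    rcases mul_eq_zero.mp h2 with h3 | h3
    · exact absurd h3 hci
    · exact h3
  -- positivity of ∫ e
  have hWnn : ∀ y : ℝ, 0 ≤ W y := by
    intro y
    rw [hWdef, hn2def, hedef]
    have := sq_nonneg ‖ηd y‖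
    have := sq_nonneg ‖η y‖
    positivity
  have henn : ∀ y : ℝ, 0 ≤ e y := fun y => sq_nonneg _
  have hy0o : y0 ∈ Ioo a b := by
    rcases eq_or_lt_of_le hy0.1 with h | h
    · exact absurd (h ▸ hψa) hψy0
    rcases eq_or_lt_of_le hy0.2 with h2 | h2
    · exact absurd (h2 ▸ hψb) hψy0
    exact ⟨h, h2⟩
  have hey0 : 0 < e y0 := by
    rw [hedef]
    have hne : η y0 ≠ 0 := by
      rw [hηdef]
      exact div_ne_zero hψy0 (hVne y0)
    exact pow_pos (norm_pos_iff.mpr hne) 2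
  have hIepos : 0 < ∫ y in a..b, e y := by
    have hca : ContinuousAt e y0 :=
      (hec y0 hy0).continuousAt (Icc_mem_nhds hy0o.1 hy0o.2)
    have hev : ∀ᶠ y in nhds y0, e y0/2 < e y :=
      hca.eventually (eventually_gt_nhds (half_lt_self hey0))
    obtain ⟨ε, hε, hball⟩ := Metric.eventually_nhds_iff.mp hev
    set δ : ℝ := min (ε/2) (min (y0-a) (b-y0)) with hδdef
    have hδpos : 0 < δ := lt_min (half_pos hε) (lt_min (by linarith [hy0o.1]) (by linarith [hy0o.2]))
    have hsub2 : Icc (y0-δ) (y0+δ) ⊆ Icc a b := by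
      intro y hy
      have h1 : δ ≤ y0 - a := le_trans (min_le_right _ _) (min_le_left _ _)
      have h2 : δ ≤ b - y0 := le_trans (min_le_right _ _) (min_le_right _ _)
      exact ⟨by linarith [hy.1], by linarith [hy.2]⟩
    have hlow : ∀ y ∈ Icc (y0-δ) (y0+δ), e y0/2 ≤ e y := by
      intro y hy
      apply le_of_lt
      apply hball
      rw [Real.dist_eq, abs_lt]
      have h3 : δ ≤ ε/2 := min_le_left _ _
      constructor <;> [linarith [hy.1]; linarith [hy.2]]
    have hord : y0 - δ ≤ y0 + δ := by linarith
    have hieab : IntervalIntegrable e MeasureTheory.volume a b :=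
      (hec.mono (by rw [hIcc])).intervalIntegrable
    have hδa : δ ≤ y0 - a := le_trans (min_le_right _ _) (min_le_left _ _)
    have hδb : δ ≤ b - y0 := le_trans (min_le_right _ _) (min_le_right _ _)
    have hay : a ≤ y0 - δ := by linarith
    have hyb : y0 + δ ≤ b := by linarith
    have hsub_l : uIcc a (y0-δ) ⊆ uIcc a b := by
      rw [uIcc_of_le hay, hIcc]; exact Icc_subset_Icc le_rfl (by linarith)
    have hsub_m : uIcc (y0-δ) (y0+δ) ⊆ uIcc a b := by
      rw [uIcc_of_le hord, hIcc]; exact Icc_subset_Icc hay hyb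
    have hsub_r : uIcc (y0+δ) b ⊆ uIcc a b := by
      rw [uIcc_of_le hyb, hIcc]; exact Icc_subset_Icc (by linarith) le_rfl
    have hnl : 0 ≤ ∫ y in a..(y0-δ), e y :=
      intervalIntegral.integral_nonneg hay (fun y _ => henn y)
    have hnr : 0 ≤ ∫ y in (y0+δ)..b, e y :=
      intervalIntegral.integral_nonneg hyb (fun y _ => henn y)
    have hmid : δ * e y0 ≤ ∫ y in (y0-δ)..(y0+δ), e y := by
      have h := intervalIntegral.integral_mono_on hord
        (_root_.intervalIntegrable_const (c := e y0/2)) (hieab.mono_set hsub_m) hlow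
      rw [intervalIntegral.integral_const, smul_eq_mul] at h
      calc δ * e y0 = (y0+δ-(y0-δ)) * (e y0/2) := by ring
        _ ≤ ∫ y in (y0-δ)..(y0+δ), e y := h
    have hsplit1 : (∫ y in a..(y0-δ), e y) + (∫ y in (y0-δ)..(y0+δ), e y)
        = ∫ y in a..(y0+δ), e y :=
      intervalIntegral.integral_add_adjacent_intervals (hieab.mono_set hsub_l)
        (hieab.mono_set hsub_m)
    have hsplit2 : (∫ y in a..(y0+δ), e y) + (∫ y in (y0+δ)..b, e y)
        = ∫ y in a..b, e y := by
      apply intervalIntegral.integral_add_adjacent_intervals _ (hieab.mono_set hsub_r)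
      apply hieab.mono_set
      rw [uIcc_of_le (by linarith : a ≤ y0+δ), hIcc]
      exact Icc_subset_Icc le_rfl hyb
    have := mul_pos hδpos hey0
    linarith
  -- Wirtinger / Poincaré inequality for η
  have hwir := wirtinger hab η ηd hdη hηdc hηa hηb
  have hba : b - a = L := by rw [hadef, hbdef]; ring
  rw [hba] at hwir
  simp only [← hedef, ← hn2def] at hwir
  -- interval integrability of everything
  have hii : ∀ {g : ℝ → ℝ}, ContinuousOn g (Icc a b) →
      IntervalIntegrable g MeasureTheory.volume a b := fun h =>
    (h.mono (by rw [hIcc])).intervalIntegrable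
  have hiW := hii hWc
  have hie := hii hec
  have hin2 := hii hn2c
  have hiAvW := hii (g := fun y => Av y * W y) (hAvc.mul hWc)
  have hiAv2W := hii (g := fun y => Av y^2 * W y) ((hAvc.pow 2).mul hWc)
  have hiBe := hii (g := fun y => B y * e y) (hBc.mul hec)
  have hiAvBe := hii (g := fun y => Av y * B y * e y) ((hAvc.mul hBc).mul hec)
  -- ∫ W = ∫ n2 + μ ∫ e
  have hIW : (∫ y in a..b, W y) = (∫ y in a..b, n2 y) + μ * ∫ y in a..b, e y := by
    have h1 : (∫ y in a..b, W y) = ∫ y in a..b, (1 * n2 y + μ * e y) := by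
      apply intervalIntegral.integral_congr
      intro y _
      rw [hWdef]; ring
    rw [h1, integral_comb2 1 μ n2 e hin2 hie, one_mul]
  -- real part identity
  have hre' : (∫ y in a..b, Av y^2 * W y) - c.im^2 * (∫ y in a..b, W y)
      - (∫ y in a..b, Av y * B y * e y) = 0 := by
    have h1 : (∫ y in a..b, f1 y)
        = 1 * (∫ y in a..b, Av y^2 * W y) + (-c.im^2) * (∫ y in a..b, W y)
          + (-1) * ∫ y in a..b, Av y * B y * e y := by
      rw [← integral_comb3 1 (-c.im^2) (-1) _ _ _ hiAv2W hiW hiAvBe]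
      apply intervalIntegral.integral_congr
      intro y _
      rw [hf1def]; ring
    rw [hre0] at h1
    linarith [h1]
  -- imaginary part identity
  have him' : (∫ y in a..b, B y * e y) - 2 * (∫ y in a..b, Av y * W y) = 0 := by
    have h1 : (∫ y in a..b, f2 y)
        = 1 * (∫ y in a..b, B y * e y) + (-2) * (∫ y in a..b, Av y * W y) := by
      rw [← integral_comb2 1 (-2) _ _ hiBe hiAvW]
      apply intervalIntegral.integral_congr
      intro y _
      rw [hf2def]; ring
    rw [him0] at h1
    linarith [h1]
  -- now fix rc
  intro rc
  set d : ℝ := c.re - rc with hddef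
  have hUrc : ∀ y : ℝ, U y - rc = Av y + d := by
    intro y; rw [hAvdef, hddef]; ring
  have hiUrcW := hii (g := fun y => (U y - rc)^2 * W y)
    (((hUc.sub continuousOn_const).pow 2).mul hWc)
  have hiUrcBe := hii (g := fun y => (rc - U y) * B y * e y)
    (((continuousOn_const.sub hUc).mul hBc).mul hec)
  have hsum1 : (∫ y in a..b, (U y - rc)^2 * W y)
      = (∫ y in a..b, Av y^2 * W y) + (2*d) * (∫ y in a..b, Av y * W y)
        + d^2 * ∫ y in a..b, W y := by
    have h1 : (∫ y in a..b, (U y - rc)^2 * W y)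
        = 1 * (∫ y in a..b, Av y^2 * W y) + (2*d) * (∫ y in a..b, Av y * W y)
          + (d^2) * ∫ y in a..b, W y := by
      rw [← integral_comb3 1 (2*d) (d^2) _ _ _ hiAv2W hiAvW hiW]
      apply intervalIntegral.integral_congr
      intro y _
      show (U y - rc)^2 * W y = 1 * (Av y^2 * W y) + (2*d) * (Av y * W y) + d^2 * (W y)
      rw [hUrc y]; ring
    rw [h1]; ring
  have hsum2 : (∫ y in a..b, (rc - U y) * B y * e y)
      = (-1) * (∫ y in a..b, Av y * B y * e y) + (-d) * ∫ y in a..b, B y * e y := by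
    rw [← integral_comb2 (-1) (-d) _ _ hiAvBe hiBe]
    apply intervalIntegral.integral_congr
    intro y _
    show (rc - U y) * B y * e y = (-1) * (Av y * B y * e y) + (-d) * (B y * e y)
    have h9 : rc - U y = -(Av y + d) := by rw [hAvdef, hddef]; ring
    rw [h9]; ring
  -- key identity
  have hkeyId : (d^2 + c.im^2) * (∫ y in a..b, W y)
      = (∫ y in a..b, (U y - rc)^2 * W y) + ∫ y in a..b, (rc - U y) * B y * e y := by
    linear_combination -hsum1 - hsum2 - hre' + d * him'
  -- sSup bounds
  have hbdd1 : BddAbove ((fun y => (U y - rc)^2) '' Icc a b) :=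
    isCompact_Icc.bddAbove_image ((hUc.sub continuousOn_const).pow 2)
  have hub1 : ∀ y ∈ Icc a b, (U y - rc)^2 ≤ sSup ((fun y => (U y - rc)^2) '' Icc a b) :=
    fun y hy => le_csSup hbdd1 (mem_image_of_mem _ hy)
  have hbdd2 : BddAbove ((fun y => (rc - U y) * B y) '' Icc a b) :=
    isCompact_Icc.bddAbove_image ((continuousOn_const.sub hUc).mul hBc)
  set M1 : ℝ := sSup ((fun y => (U y - rc)^2) '' Icc a b) with hM1def
  set M2 : ℝ := max 0 (sSup ((fun y => (rc - U y) * B y) '' Icc a b)) with hM2def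
  have hub2 : ∀ y ∈ Icc a b, (rc - U y) * B y ≤ M2 := fun y hy =>
    le_trans (le_csSup hbdd2 (mem_image_of_mem _ hy)) (le_max_right _ _)
  have hM2nn : 0 ≤ M2 := le_max_left _ _
  have hbound1 : (∫ y in a..b, (U y - rc)^2 * W y) ≤ M1 * ∫ y in a..b, W y := by
    rw [← intervalIntegral.integral_const_mul]
    apply intervalIntegral.integral_mono_on hab.le hiUrcW (hiW.const_mul M1)
    intro y hy
    exact mul_le_mul_of_nonneg_right (hub1 y hy) (hWnn y)
  have hbound2 : (∫ y in a..b, (rc - U y) * B y * e y) ≤ M2 * ∫ y in a..b, e y := by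
    rw [← intervalIntegral.integral_const_mul]
    apply intervalIntegral.integral_mono_on hab.le hiUrcBe (hie.const_mul M2)
    intro y hy
    exact mul_le_mul_of_nonneg_right (hub2 y hy) (henn y)
  -- the Poincaré constant
  set K : ℝ := (Real.pi^2/L^2 + 1/Ld^2) + k^2 with hKdef
  have hKpos : 0 < K := by
    have h1 : 0 < Real.pi^2/L^2 := div_pos (pow_pos Real.pi_pos 2) (pow_pos hL 2)
    have h2 : (0:ℝ) < 1/Ld^2 := by positivity
    have h3 : (0:ℝ) ≤ k^2 := sq_nonneg k
    rw [hKdef]; linarith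
  have hKeq : K = (Real.pi/L)^2 + μ := by
    rw [hKdef, hμdef, div_pow]; ring
  have hKIe : K * (∫ y in a..b, e y) ≤ ∫ y in a..b, W y := by
    rw [hKeq, hIW]
    have := hwir
    nlinarith [hμpos, hIepos]
  have hIWpos : 0 < ∫ y in a..b, W y :=
    lt_of_lt_of_le (mul_pos hKpos hIepos) hKIe
  -- combine everything
  have hmain : ((c.re - rc)^2 + c.im^2) * (∫ y in a..b, W y)
      ≤ M1 * (∫ y in a..b, W y) + M2 * ∫ y in a..b, e y := by
    rw [← hddef]
    calc (d^2 + c.im^2) * (∫ y in a..b, W y)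
        = (∫ y in a..b, (U y - rc)^2 * W y) + ∫ y in a..b, (rc - U y) * B y * e y := hkeyId
      _ ≤ M1 * (∫ y in a..b, W y) + M2 * ∫ y in a..b, e y := add_le_add hbound1 hbound2
  have h7 : M2 * (∫ y in a..b, e y) ≤ 1/K * M2 * ∫ y in a..b, W y := by
    rw [show 1/K * M2 * (∫ y in a..b, W y) = (M2 * ∫ y in a..b, W y)/K by field_simp,
      le_div_iff₀ hKpos]
    nlinarith [mul_le_mul_of_nonneg_left hKIe hM2nn]
  have h8 : ((c.re - rc)^2 + c.im^2) * (∫ y in a..b, W y)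
      ≤ (M1 + 1/K * M2) * ∫ y in a..b, W y := by nlinarith
  exact le_of_mul_le_mul_right h8 hIWpos
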